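/- arXiv:1603.00668 — 2 statements merged into one kernel-verified Lean document; each statement's English description precedes it below -/
import Mathlib

section
/- (Céa lemma.) Suppose u ∈ V satisfies a(u, v) = f(v) for all v ∈ V, and u_W is a Galerkin solution on a finite-dimensional subspace W ⊆ V. Then ‖u − u_W‖_V ≤ (γ/α) ‖u − P_W u‖_V, where ‖u − P_W u‖_V = inf_{w ∈ W} ‖u − w‖_V. -/
open scoped RealInnerProductSpace

/-- Orthogonal projection onto a submodule, as a plain function; it equals the usual
orthogonal projection whenever the submodule is finite-dimensional. -/
noncomputable def orthProj {V : Type*} [NormedAddCommGroup V] [InnerProductSpace ℝ V]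
    (K : Submodule ℝ V) (x : V) : V := by
  classical
  exact if h : FiniteDimensional ℝ K then
    haveI := h
    (K.orthogonalProjectionOnto x : V)
  else 0

/-- **Céa's lemma.** If `u` solves the continuous problem and `uW` is a Galerkin solution on a finite-dimensional subspace `W`, then `‖u - uW‖ ≤ (γ/α) ‖u - P_W u‖`, where `‖u - P_W u‖ = inf_{w ∈ W} ‖u - w‖`. -/
theorem cea_lemma
    {V : Type*} [NormedAddCommGroup V] [InnerProductSpace ℝ V]
    (a : V →ₗ[ℝ] V →ₗ[ℝ] ℝ) (f : V →ₗ[ℝ] ℝ)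
    (α γ : ℝ) (hα : 0 < α)
    (hcoer : ∀ v : V, α * ‖v‖ ^ 2 ≤ a v v)
    (hcont : ∀ v w : V, |a v w| ≤ γ * ‖v‖ * ‖w‖)
    (u : V) (hu : ∀ v : V, a u v = f v)
    (W : Submodule ℝ V) [FiniteDimensional ℝ ↥W]
    (uW : V) (huW : uW ∈ W) (hGal : ∀ w ∈ W, a uW w = f w) :
    ‖u - uW‖ ≤ (γ / α) * ‖u - orthProj W u‖ ∧
      ‖u - orthProj W u‖ = ⨅ w : W, ‖u - (w : V)‖ := by
  classical
  have hproj : orthProj W u = (W.orthogonalProjectionOnto u : V) := by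
    simp [orthProj, dif_pos ‹FiniteDimensional ℝ ↥W›]
  have hmin : ‖u - orthProj W u‖ = ⨅ w : W, ‖u - (w : V)‖ := by
    rw [hproj]; rw [← Submodule.starProjection_apply]; exact Submodule.starProjection_minimal u
  refine ⟨?_, hmin⟩
  set e := u - uW with he
  set p := orthProj W u with hpdef
  have hpW : p ∈ W := by rw [hproj]; exact (W.orthogonalProjectionOnto u).2
  -- Galerkin orthogonality
  have horth : ∀ w ∈ W, a e w = 0 := by
    intro w hw
    simp [he, map_sub, hu w, hGal w hw]
  have key : a e e = a e (u - p) := by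
    have h1 : a e (p - uW) = 0 := horth _ (W.sub_mem hpW huW)
    have : a e e = a e (u - p) + a e (p - uW) := by
      rw [← map_add]; congr 1; rw [he]; abel
    rw [this, h1, add_zero]
  have hineq : α * ‖e‖ ^ 2 ≤ γ * ‖e‖ * ‖u - p‖ :=
    (hcoer e).trans (key ▸ (le_abs_self _).trans (hcont e (u - p)))
  by_cases hz : ‖e‖ = 0
  · rw [hz]
    by_cases hp0 : ‖u - p‖ = 0
    · rw [hp0]; simp
    · have hpos : 0 < ‖u - p‖ := lt_of_le_of_ne (norm_nonneg _) (Ne.symm hp0)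
      have hγ : 0 < γ := by
        have h1 : α * ‖u - p‖ ^ 2 ≤ γ * ‖u - p‖ * ‖u - p‖ :=
          (hcoer (u - p)).trans ((le_abs_self _).trans (hcont (u - p) (u - p)))
        nlinarith [mul_pos hpos hpos, mul_pos hα (mul_pos hpos hpos)]
      positivity
  · have hpos : 0 < ‖e‖ := lt_of_le_of_ne (norm_nonneg _) (Ne.symm hz)
    rw [div_mul_eq_mul_div, le_div_iff₀ hα]
    nlinarith [hineq]
end

section
/- Suppose u ∈ V satisfies a(u, v) = f(v) for all v ∈ V. Let V_n and V^R be finite-dimensional subspaces of V, let u_n be a Galerkin solution on V_n, and let u^R be a Galerkin solution on V^R. Then ‖u − u^R‖_V ≤ (γ/α) ‖u_n − P_{V^R} u_n‖_V + (γ/α) ‖u − u_n‖_V. -/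
open scoped RealInnerProductSpace

/-- **Error split for the reduced-order solution.** `‖u - u^R‖ ≤ (γ/α)‖u_n - P_{V^R} u_n‖ + (γ/α)‖u - u_n‖`. -/
theorem rom_error_split_snapshot
    {V : Type*} [NormedAddCommGroup V] [InnerProductSpace ℝ V]
    (a : V →ₗ[ℝ] V →ₗ[ℝ] ℝ) (f : V →ₗ[ℝ] ℝ)
    (α γ : ℝ) (hα : 0 < α)
    (hcoer : ∀ v : V, α * ‖v‖ ^ 2 ≤ a v v)
    (hcont : ∀ v w : V, |a v w| ≤ γ * ‖v‖ * ‖w‖)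
    (u : V) (hu : ∀ v : V, a u v = f v)
    (Vn VR : Submodule ℝ V) [FiniteDimensional ℝ ↥Vn] [FiniteDimensional ℝ ↥VR]
    (un : V) (hun : un ∈ Vn) (hGaln : ∀ w ∈ Vn, a un w = f w)
    (uR : V) (huR : uR ∈ VR) (hGalR : ∀ w ∈ VR, a uR w = f w) :
    ‖u - uR‖ ≤ (γ / α) * ‖un - orthProj VR un‖ + (γ / α) * ‖u - un‖ := by
  classical
  -- Galerkin orthogonality
  have horth : ∀ v ∈ VR, a (u - uR) v = 0 := by
    intro v hv
    have : a (u - uR) v = a u v - a uR v := by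
      simp [LinearMap.sub_apply, map_sub]
    rw [this, hu v, hGalR v hv, sub_self]
  -- Céa's lemma on VR
  have cea : ∀ w ∈ VR, ‖u - uR‖ ≤ (γ / α) * ‖u - w‖ := by
    intro w hw
    set e := u - uR with he
    set d := u - w with hd
    have key : a e e = a e d := by
      have h1 : a e (w - uR) = 0 := horth _ (Submodule.sub_mem _ hw huR)
      have h2 : e = d + (w - uR) := by rw [he, hd]; abel
      calc a e e = a e (d + (w - uR)) := by rw [← h2]
        _ = a e d + a e (w - uR) := by rw [map_add]
        _ = a e d := by rw [h1, add_zero]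
    have h2 : α * ‖e‖ ^ 2 ≤ γ * ‖e‖ * ‖d‖ := by
      calc α * ‖e‖ ^ 2 ≤ a e e := hcoer e
        _ = a e d := key
        _ ≤ |a e d| := le_abs_self _
        _ ≤ γ * ‖e‖ * ‖d‖ := hcont e d
    by_cases hez : ‖e‖ = 0
    · rw [hez]
      by_cases hdz : d = 0
      · simp [hdz]
      · have hdn : 0 < ‖d‖ := norm_pos_iff.mpr hdz
        have hc := hcoer d
        have hco := (le_abs_self (a d d)).trans (hcont d d)
        have hγ : α ≤ γ := by
          rw [pow_two] at hc; nlinarith [mul_pos hdn hdn]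
        exact mul_nonneg (div_nonneg (le_of_lt (lt_of_lt_of_le hα hγ)) hα.le) (norm_nonneg _)
    · have hen : 0 < ‖e‖ := lt_of_le_of_ne (norm_nonneg e) (Ne.symm hez)
      rw [div_mul_eq_mul_div, le_div_iff₀ hα]
      nlinarith
  -- apply with w = orthProj VR un
  have hP : orthProj VR un = (VR.orthogonalProjectionOnto un : V) := by
    simp only [orthProj]
    rw [dif_pos ‹FiniteDimensional ℝ ↥VR›]
  have hPmem : orthProj VR un ∈ VR := by
    rw [hP]; exact (VR.orthogonalProjectionOnto un).2
  have h1 := cea _ hPmem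
  have htri : ‖u - orthProj VR un‖ ≤ ‖un - orthProj VR un‖ + ‖u - un‖ := by
    have : u - orthProj VR un = (u - un) + (un - orthProj VR un) := by abel
    rw [this]
    calc ‖(u - un) + (un - orthProj VR un)‖ ≤ ‖u - un‖ + ‖un - orthProj VR un‖ :=
          norm_add_le _ _
      _ = ‖un - orthProj VR un‖ + ‖u - un‖ := by ring
  by_cases hV : ∀ v : V, v = 0
  · rw [hV (u - uR), hV (un - orthProj VR un), hV (u - un)]
    simp
  have hγα : 0 ≤ γ / α := by
    push_neg at hV
    obtain ⟨v, hv⟩ := hV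
    have hvn : 0 < ‖v‖ := norm_pos_iff.mpr hv
    have hc := hcoer v
    have hco := (le_abs_self (a v v)).trans (hcont v v)
    have hγ : α ≤ γ := by rw [pow_two] at hc; nlinarith [mul_pos hvn hvn]
    exact div_nonneg (le_of_lt (lt_of_lt_of_le hα hγ)) hα.le
  calc ‖u - uR‖ ≤ (γ / α) * ‖u - orthProj VR un‖ := h1
    _ ≤ (γ / α) * (‖un - orthProj VR un‖ + ‖u - un‖) := by
        exact mul_le_mul_of_nonneg_left htri hγα
    _ = (γ / α) * ‖un - orthProj VR un‖ + (γ / α) * ‖u - un‖ := by ring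
end
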